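/- There exists a constant ε > 0 such that for all sufficiently large n the polynomial P(X) = ∏_{i=1}^{2^n} (X^i − 1) cannot be written in the form ∑_{j=0}^{t} c_j X^{α_j}(a + bX)^{β_j} with a, b, c_j ∈ ℚ, t ≤ 2^{εn}, all exponents α_j, β_j of bit size at most 2^{εn} (i.e., α_j, β_j < 2^{2^{εn}}), and all coefficients c_j of bit size at most 2^{εn} (i.e., the absolute values of the numerator and of the denominator of each c_j are less than 2^{2^{εn}}). -/

import Mathlib

open Polynomial

section AuxST10
open Matrix

lemma const_ratio (p q : ℚ[X]) (hq : q ≠ 0)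
    (h : q * derivative p = derivative q * p) : ∃ s : ℚ, p = C s * q := by
  rcases eq_or_ne p 0 with rfl | hp
  · exact ⟨0, by simp⟩
  · set d := GCDMonoid.gcd p q with hd
    have hdq : d ∣ q := gcd_dvd_right p q
    have hdp : d ∣ p := gcd_dvd_left p q
    have hd0 : d ≠ 0 := gcd_ne_zero_of_right hq
    have hp1 : d * (p / d) = p := EuclideanDomain.mul_div_cancel' hd0 hdp
    have hq1 : d * (q / d) = q := EuclideanDomain.mul_div_cancel' hd0 hdq
    set p1 := p / d
    set q1 := q / d
    have hcop : IsCoprime p1 q1 := isCoprime_div_gcd_div_gcd hq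
    have hq10 : q1 ≠ 0 := right_div_gcd_ne_zero hq
    have hp10 : p1 ≠ 0 := left_div_gcd_ne_zero hp
    -- reduce the relation
    have key : q1 * derivative p1 = derivative q1 * p1 := by
      have h2 : d * (q1 * (derivative d * p1 + d * derivative p1))
          = d * ((derivative d * q1 + d * derivative q1) * p1) := by
        calc d * (q1 * (derivative d * p1 + d * derivative p1))
            = q * derivative p := by rw [← hp1, ← hq1]; ring_nf; rw [derivative_mul]; ring
          _ = derivative q * p := h
          _ = d * ((derivative d * q1 + d * derivative q1) * p1) := by
              rw [← hp1, ← hq1]; ring_nf; rw [derivative_mul]; ring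
      have h3 := mul_left_cancel₀ hd0 h2
      have h4 : d * (q1 * derivative p1) = d * (derivative q1 * p1) := by
        linear_combination h3
      exact mul_left_cancel₀ hd0 h4
    -- q1 divides q1'
    have hdvd : q1 ∣ derivative q1 := by
      have h5 : q1 ∣ p1 * derivative q1 := ⟨derivative p1, by linear_combination -key⟩
      exact hcop.symm.dvd_of_dvd_mul_left h5
    have hq1deg : q1.natDegree = 0 := by
      by_contra hne
      have hd' : derivative q1 ≠ 0 := by
        intro h0
        exact hne (natDegree_eq_zero_of_derivative_eq_zero h0)
      have := Polynomial.natDegree_le_of_dvd hdvd hd'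
      have h2 := Polynomial.natDegree_derivative_lt hne
      omega
    have hp1' : derivative p1 = 0 := by
      have hq1' : derivative q1 = 0 := by
        have := natDegree_derivative_lt (p := q1)
        rcases eq_or_ne (derivative q1) 0 with h0 | h0
        · exact h0
        · have := Polynomial.natDegree_le_of_dvd hdvd h0
          have h2 : q1.natDegree ≠ 0 := by
            intro hz
            rw [Polynomial.eq_C_of_natDegree_eq_zero hz] at h0
            simp at h0
          exact absurd hq1deg h2
      have : q1 * derivative p1 = 0 := by rw [key, hq1', zero_mul]
      rcases mul_eq_zero.mp this with h | h
      · exact absurd h hq10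
      · exact h
    have hp1deg : p1.natDegree = 0 := natDegree_eq_zero_of_derivative_eq_zero hp1'
    set γ : ℚ := q1.coeff 0
    set δ : ℚ := p1.coeff 0
    have hq1C : q1 = C γ := Polynomial.eq_C_of_natDegree_eq_zero hq1deg
    have hp1C : p1 = C δ := Polynomial.eq_C_of_natDegree_eq_zero hp1deg
    have hγ : γ ≠ 0 := by intro h0; rw [h0] at hq1C; simp at hq1C; exact hq10 hq1C
    refine ⟨δ / γ, ?_⟩
    rw [← hp1, ← hq1, hp1C, hq1C]
    have : (C (δ / γ) : ℚ[X]) * C γ = C δ := by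
      rw [← C_mul, div_mul_cancel₀ _ hγ]
    calc d * C δ = C (δ / γ) * C γ * d := by rw [this]; ring
      _ = C (δ / γ) * (d * C γ) := by ring

lemma dvd_derivative_of_pow_dvd {x : ℚ} {m : ℕ} {f : ℚ[X]}
    (h : (X - C x) ^ m ∣ f) : (X - C x) ^ (m - 1) ∣ derivative f := by
  obtain ⟨g, rfl⟩ := h
  rw [derivative_mul, derivative_pow]
  rcases Nat.eq_zero_or_pos m with rfl | hm
  · simp
  · have h1 : (X - C x) ^ (m - 1) ∣ (X - C x) ^ m := pow_dvd_pow _ (Nat.sub_le m 1)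
    exact dvd_add (Dvd.dvd.mul_right (by
      rw [derivative_sub, derivative_X, derivative_C, sub_zero, mul_one];
      exact Dvd.dvd.mul_left (dvd_refl _) _) g) (h1.mul_right _)

lemma dvd_iterate_derivative {x : ℚ} {m : ℕ} {f : ℚ[X]} (i : ℕ)
    (h : (X - C x) ^ m ∣ f) : (X - C x) ^ (m - i) ∣ derivative^[i] f := by
  induction i with
  | zero => simpa using h
  | succ n ih =>
      rw [Function.iterate_succ_apply']
      have := dvd_derivative_of_pow_dvd ih
      rwa [Nat.sub_sub] at this

lemma natDegree_det_le {k : ℕ} (M : Matrix (Fin k) (Fin k) ℚ[X]) (e : Fin k → ℕ)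
    (h : ∀ j i, (M j i).natDegree ≤ e i) : (det M).natDegree ≤ ∑ i, e i := by
  have key : ∀ σ : Equiv.Perm (Fin k),
      (((Equiv.Perm.sign σ : ℤ) : ℚ[X]) * ∏ i, M (σ i) i).natDegree ≤ ∑ i, e i := by
    intro σ
    refine le_trans (Polynomial.natDegree_mul_le) ?_
    rw [Polynomial.natDegree_intCast, zero_add]
    refine le_trans (Polynomial.natDegree_prod_le _ _) ?_
    exact Finset.sum_le_sum fun i _ => h (σ i) i
  rw [Matrix.det_apply']
  refine le_trans (Polynomial.natDegree_sum_le Finset.univ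
    (fun σ : Equiv.Perm (Fin k) => ((Equiv.Perm.sign σ : ℤ) : ℚ[X]) * ∏ i, M (σ i) i)) ?_
  rw [Finset.fold_max_le]
  exact ⟨Nat.zero_le _, fun σ _ => key σ⟩

lemma L_natDegree_le (a b : ℚ) : (C a + C b * X : ℚ[X]).natDegree ≤ 1 := by
  refine le_trans (natDegree_add_le _ _) ?_
  refine max_le (by simp) (le_trans (natDegree_C_mul_le _ _) natDegree_X_le)

lemma iter_deriv_form (a b : ℚ) (i α β : ℕ) (hα : i ≤ α) (hβ : i ≤ β) :
    ∃ p : ℚ[X], p.natDegree ≤ i ∧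
      derivative^[i] (X ^ α * (C a + C b * X) ^ β) =
        X ^ (α - i) * (C a + C b * X) ^ (β - i) * p := by
  induction i with
  | zero => exact ⟨1, by simp, by simp⟩
  | succ n ih =>
      obtain ⟨p, hdeg, heq⟩ := ih (le_trans (Nat.le_succ n) hα) (le_trans (Nat.le_succ n) hβ)
      set L : ℚ[X] := C a + C b * X with hL
      have hLdeg : L.natDegree ≤ 1 := L_natDegree_le a b
      have hA : α - n = (α - (n+1)) + 1 := by omega
      have hB : β - n = (β - (n+1)) + 1 := by omega
      set A := α - (n+1)
      set B := β - (n+1)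
      refine ⟨C ((A:ℚ) + 1) * L * p + C (((B:ℚ) + 1) * b) * X * p + X * L * derivative p,
        ?_, ?_⟩
      · have h1 : (C ((A:ℚ) + 1) * L * p).natDegree ≤ n + 1 := by
          refine le_trans natDegree_mul_le ?_
          have : (C ((A:ℚ) + 1) * L).natDegree ≤ 1 := le_trans (natDegree_C_mul_le _ _) hLdeg
          omega
        have h2 : (C (((B:ℚ) + 1) * b) * X * p).natDegree ≤ n + 1 := by
          refine le_trans natDegree_mul_le ?_
          have : (C (((B:ℚ) + 1) * b) * X).natDegree ≤ 1 :=
            le_trans (natDegree_C_mul_le _ _) natDegree_X_le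
          omega
        have h3 : (X * L * derivative p).natDegree ≤ n + 1 := by
          rcases Nat.eq_zero_or_pos n with rfl | hn
          · have hp0 : derivative p = 0 := by
              rw [Polynomial.eq_C_of_natDegree_eq_zero (Nat.le_zero.mp hdeg)]
              simp
            simp [hp0]
          · refine le_trans natDegree_mul_le ?_
            have hXL : ((X : ℚ[X]) * L).natDegree ≤ 2 := by
              refine le_trans natDegree_mul_le ?_
              have := natDegree_X_le (R := ℚ)
              omega
            have hp' : (derivative p).natDegree ≤ n - 1 :=
              le_trans (natDegree_derivative_le p) (by omega)
            omega
        exact le_trans (natDegree_add_le _ _)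
          (max_le (le_trans (natDegree_add_le _ _) (max_le h1 h2)) h3)
      · rw [Function.iterate_succ_apply', heq, hA, hB]
        have hdL : derivative L = C b := by
          rw [hL]; simp
        simp only [derivative_mul, derivative_pow, hdL, derivative_X]
        push_cast
        simp only [C_mul, C_add, C_1]
        ring

lemma ode_span {r : ℕ} (g : Fin r → ℚ[X]) (h : ℚ[X])
    (HW : (Matrix.of fun i j : Fin r => derivative^[(i : ℕ)] (g j)).det ≠ 0)
    (HWh : (Matrix.of fun i j : Fin (r+1) =>
      derivative^[(i : ℕ)] ((Fin.snoc g h : Fin (r+1) → ℚ[X]) j)).det = 0) :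
    ∃ q : Fin r → ℚ, h = ∑ j, C (q j) * g j := by
  set ψ : Fin (r+1) → ℚ[X] := Fin.snoc g h with hψ
  set A : Matrix (Fin (r+1)) (Fin (r+1)) ℚ[X] :=
    Matrix.of fun i j => derivative^[(i : ℕ)] (ψ j) with hA
  set c : Fin (r+1) → ℚ[X] := fun j =>
    (-1 : ℚ[X]) ^ ((r : ℕ) + (j : ℕ)) * (A.submatrix (Fin.last r).succAbove j.succAbove).det
    with hc
  -- the cofactor relations
  have key1 : ∀ i : Fin (r+1), ∑ j, A i j * c j = (A.updateRow (Fin.last r) (A i)).det := by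
    intro i
    rw [Matrix.det_succ_row _ (Fin.last r)]
    refine Finset.sum_congr rfl fun j _ => ?_
    have h1 : (A.updateRow (Fin.last r) (A i)) (Fin.last r) j = A i j :=
      congrFun (Matrix.updateRow_self) j
    have h2 : ((A.updateRow (Fin.last r) (A i)).submatrix (Fin.last r).succAbove j.succAbove)
        = A.submatrix (Fin.last r).succAbove j.succAbove := by
      ext k l
      simp only [Matrix.submatrix_apply]
      rw [Matrix.updateRow_ne]
      rw [Fin.succAbove_last]
      exact (Fin.castSucc_lt_last k).ne
    rw [h1, h2, Fin.val_last]
    ring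
  have Hc : ∀ i : Fin (r+1), ∑ j, A i j * c j = 0 := by
    intro i
    rw [key1 i]
    rcases eq_or_ne i (Fin.last r) with rfl | hne
    · rw [Matrix.updateRow_eq_self]
      exact HWh
    · exact Matrix.det_updateRow_eq_zero hne
  -- the value of the last cofactor
  have hclast : c (Fin.last r) = (Matrix.of fun i j : Fin r => derivative^[(i : ℕ)] (g j)).det := by
    show (-1 : ℚ[X]) ^ ((r:ℕ) + (Fin.last r : ℕ)) *
      (A.submatrix (Fin.last r).succAbove (Fin.last r).succAbove).det = _
    have he : ((-1 : ℚ[X]) ^ ((r:ℕ) + (Fin.last r : ℕ))) = 1 := by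
      rw [Fin.val_last]
      exact Even.neg_one_pow ⟨r, rfl⟩
    rw [he, one_mul]
    congr 1
    ext i j
    simp only [Matrix.submatrix_apply, Fin.succAbove_last, Matrix.of_apply, hA]
    rw [hψ]
    simp [Fin.snoc_castSucc]
  have hW0 : c (Fin.last r) ≠ 0 := by rw [hclast]; exact HW
  -- derivative relations
  have Hc' : ∀ i : Fin r, ∑ j, A (Fin.castSucc i) j * derivative (c j) = 0 := by
    intro i
    have hD := congrArg derivative (Hc (Fin.castSucc i))
    rw [derivative_sum, derivative_zero] at hD
    have hterm : ∀ j : Fin (r+1), derivative (A (Fin.castSucc i) j * c j)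
        = A i.succ j * c j + A (Fin.castSucc i) j * derivative (c j) := by
      intro j
      rw [derivative_mul]
      congr 2
      show derivative (derivative^[((Fin.castSucc i : ℕ))] (ψ j)) = derivative^[(i.succ : ℕ)] (ψ j)
      rw [Fin.coe_castSucc, Fin.val_succ, Function.iterate_succ_apply']
    rw [Finset.sum_congr rfl (fun j _ => hterm j), Finset.sum_add_distrib] at hD
    rw [Hc i.succ, zero_add] at hD
    exact hD
  -- move to the fraction field
  set K := FractionRing ℚ[X]
  set φ : ℚ[X] →+* K := algebraMap ℚ[X] K with hφ
  have hinj : Function.Injective φ := IsFractionRing.injective ℚ[X] K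
  set B : Matrix (Fin r) (Fin (r+1)) K := Matrix.of fun i j => φ (A (Fin.castSucc i) j) with hB
  set u : Fin (r+1) → K := fun j => φ (c j) with hu
  set v : Fin (r+1) → K := fun j => φ (derivative (c j)) with hv
  have hBu : ∀ i, ∑ j, B i j * u j = 0 := by
    intro i
    have := congrArg φ (Hc (Fin.castSucc i))
    rw [map_sum, map_zero] at this
    simpa [hB, hu] using this
  have hBv : ∀ i, ∑ j, B i j * v j = 0 := by
    intro i
    have := congrArg φ (Hc' i)
    rw [map_sum, map_zero] at this
    simpa [hB, hv] using this
  set w : Fin (r+1) → K := fun j => u (Fin.last r) * v j - v (Fin.last r) * u j with hw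
  have hBw : ∀ i, ∑ j, B i j * w j = 0 := by
    intro i
    have : ∑ j, B i j * w j
        = u (Fin.last r) * (∑ j, B i j * v j) - v (Fin.last r) * (∑ j, B i j * u j) := by
      rw [Finset.mul_sum, Finset.mul_sum, ← Finset.sum_sub_distrib]
      exact Finset.sum_congr rfl fun j _ => by rw [hw]; ring
    rw [this, hBu i, hBv i, mul_zero, mul_zero, sub_zero]
  have hwlast : w (Fin.last r) = 0 := by rw [hw]; ring
  -- the square submatrix is invertible
  set B' : Matrix (Fin r) (Fin r) K := Matrix.of fun i j => B i (Fin.castSucc j) with hB'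
  have hdetB' : B'.det ≠ 0 := by
    have : B' = φ.mapMatrix (Matrix.of fun i j : Fin r => derivative^[(i : ℕ)] (g j)) := by
      ext i j
      simp only [hB', hB, Matrix.of_apply, RingHom.mapMatrix_apply, Matrix.map_apply, hA]
      congr 1
      rw [Fin.coe_castSucc, hψ]
      simp [Fin.snoc_castSucc]
    rw [this, ← RingHom.map_det]
    intro h0
    exact HW (hinj (by rwa [map_zero]))
  have hwcast : ∀ j : Fin r, w (Fin.castSucc j) = 0 := by
    have hmul : B'.mulVec (fun j => w (Fin.castSucc j)) = 0 := by
      funext i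
      have hsum := hBw i
      rw [Fin.sum_univ_castSucc, hwlast, mul_zero, add_zero] at hsum
      show ∑ j : Fin r, B' i j * w (Fin.castSucc j) = (0 : Fin r → K) i
      rw [Pi.zero_apply, ← hsum]
      exact Finset.sum_congr rfl fun j _ => rfl
    have hunit : IsUnit B'.det := (Ne.isUnit hdetB')
    have : (fun j => w (Fin.castSucc j)) = B'⁻¹.mulVec (B'.mulVec (fun j => w (Fin.castSucc j))) := by
      rw [Matrix.mulVec_mulVec, Matrix.nonsing_inv_mul _ hunit, Matrix.one_mulVec]
    intro j
    have := congrFun (this.trans (by rw [hmul, Matrix.mulVec_zero])) j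
    exact this
  have hwzero : ∀ j : Fin (r+1), w j = 0 := by
    intro j
    rcases Fin.lastCases (motive := fun j => w j = 0) hwlast hwcast with _
    exact Fin.lastCases hwlast hwcast j
  -- proportionality and constants
  have hrel : ∀ j : Fin (r+1), c (Fin.last r) * derivative (c j) = derivative (c (Fin.last r)) * c j := by
    intro j
    have := hwzero j
    rw [hw, sub_eq_zero, hu, hv] at this
    exact hinj ((φ.map_mul _ _).trans (this.trans (φ.map_mul _ _).symm))
  have hs : ∀ j : Fin (r+1), ∃ s : ℚ, c j = C s * c (Fin.last r) := by
    intro j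
    exact const_ratio (c j) (c (Fin.last r)) hW0 (hrel j)
  choose s hsc using hs
  -- the linear relation among the functions
  have hlin : ∑ j : Fin (r+1), C (s j) * ψ j = 0 := by
    have h0 := Hc 0
    have hA0 : ∀ j, A (0 : Fin (r+1)) j = ψ j := by
      intro j
      show derivative^[((0 : Fin (r+1)) : ℕ)] (ψ j) = ψ j
      norm_num
    have : ∑ j, ψ j * (C (s j) * c (Fin.last r)) = 0 := by
      rw [← h0]
      exact Finset.sum_congr rfl fun j _ => by rw [hA0 j, hsc j]
    have h2 : (∑ j, C (s j) * ψ j) * c (Fin.last r) = 0 := by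
      rw [Finset.sum_mul, ← this]
      exact Finset.sum_congr rfl fun j _ => by ring
    rcases mul_eq_zero.mp h2 with h3 | h3
    · exact h3
    · exact absurd h3 hW0
  have hslast : s (Fin.last r) = 1 := by
    have := hsc (Fin.last r)
    have h2 : (C (s (Fin.last r)) - 1) * c (Fin.last r) = 0 := by
      rw [sub_mul, one_mul, ← this, sub_self]
    rcases mul_eq_zero.mp h2 with h3 | h3
    · have : C (s (Fin.last r)) = (1 : ℚ[X]) := by linear_combination h3
      have := congrArg (fun p : ℚ[X] => p.coeff 0) this
      simpa using this
    · exact absurd h3 hW0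
  refine ⟨fun j => -(s (Fin.castSucc j)), ?_⟩
  have hsplit : ∑ j : Fin (r+1), C (s j) * ψ j
      = (∑ j : Fin r, C (s (Fin.castSucc j)) * ψ (Fin.castSucc j))
        + C (s (Fin.last r)) * ψ (Fin.last r) := Fin.sum_univ_castSucc _
  rw [hlin] at hsplit
  have hψlast : ψ (Fin.last r) = h := by rw [hψ]; simp
  have hψcast : ∀ j : Fin r, ψ (Fin.castSucc j) = g j := by
    intro j; rw [hψ]; simp [Fin.snoc_castSucc]
  rw [hψlast, hslast, C_1, one_mul] at hsplit
  have : h = -∑ j : Fin r, C (s (Fin.castSucc j)) * ψ (Fin.castSucc j) := by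
    linear_combination -hsplit
  rw [this]
  rw [← Finset.sum_neg_distrib]
  exact Finset.sum_congr rfl fun j _ => by rw [hψcast j, map_neg]; ring

lemma wronskian_zero_dep {k : ℕ} (ψ : Fin k → ℚ[X])
    (H : (Matrix.of fun i j : Fin k => derivative^[(i : ℕ)] (ψ j)).det = 0) :
    ∃ e : Fin k → ℚ, e ≠ 0 ∧ ∑ j, C (e j) * ψ j = 0 := by
  induction k with
  | zero =>
      exfalso
      rw [Matrix.det_fin_zero] at H
      exact one_ne_zero H
  | succ k ih =>
      set g : Fin k → ℚ[X] := fun j => ψ (Fin.castSucc j) with hg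
      rcases eq_or_ne (Matrix.of fun i j : Fin k => derivative^[(i : ℕ)] (g j)).det 0 with h0 | h0
      · obtain ⟨e, he, hsum⟩ := ih g h0
        refine ⟨Fin.snoc e 0, ?_, ?_⟩
        · obtain ⟨j, hj⟩ := Function.ne_iff.mp he
          refine Function.ne_iff.mpr ⟨Fin.castSucc j, ?_⟩
          simpa [Fin.snoc_castSucc] using hj
        · rw [Fin.sum_univ_castSucc]
          simp only [Fin.snoc_castSucc, Fin.snoc_last, map_zero, zero_mul, add_zero]
          exact hsum
      · have hsnoc : (Fin.snoc g (ψ (Fin.last k)) : Fin (k+1) → ℚ[X]) = ψ := by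
          funext j
          refine Fin.lastCases ?_ ?_ j
          · simp
          · intro i
            simp [Fin.snoc_castSucc, hg]
        obtain ⟨q, hq⟩ := ode_span g (ψ (Fin.last k)) h0 (by rw [hsnoc]; exact H)
        refine ⟨Fin.snoc q (-1), ?_, ?_⟩
        · refine Function.ne_iff.mpr ⟨Fin.last k, ?_⟩
          simp
        · rw [Fin.sum_univ_castSucc]
          simp only [Fin.snoc_castSucc, Fin.snoc_last]
          rw [hq]
          simp only [map_neg, C_1]
          ring_nf
          simp [hg]

lemma core (x a b : ℚ) (hx : x ≠ 0) (hLx : a + b * x ≠ 0) :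
    ∀ (k : ℕ) (d : Fin k → ℚ) (α β : Fin k → ℕ) (m : ℕ),
      (∑ j, C (d j) * X ^ (α j) * (C a + C b * X) ^ (β j)) ≠ 0 →
      (X - C x) ^ m ∣ (∑ j, C (d j) * X ^ (α j) * (C a + C b * X) ^ (β j)) →
      m ≤ k + 2 * k * k := by
  intro k
  induction k with
  | zero =>
      intro d α β m hne _
      simp at hne
  | succ k ih =>
      intro d α β m hne hdvd
      set L : ℚ[X] := C a + C b * X with hLdef
      have hL0 : L ≠ 0 := by
        intro h0
        apply hLx
        have := congrArg (Polynomial.eval x) h0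
        simpa [hLdef] using this
      have hK : k + 1 = k + 1 := rfl
      set f : ℚ[X] := ∑ j : Fin (k+1), C (d j) * X ^ (α j) * L ^ (β j) with hf
      set ψ : Fin (k+1) → ℚ[X] := fun j => X ^ (α j + (k+1)) * L ^ (β j + (k+1)) with hψ
      have hftil : X ^ (k+1) * L ^ (k+1) * f = ∑ j : Fin (k+1), C (d j) * ψ j := by
        rw [hf, Finset.mul_sum]
        refine Finset.sum_congr rfl fun j _ => ?_
        rw [hψ, pow_add, pow_add]
        ring
      set ftil : ℚ[X] := X ^ (k+1) * L ^ (k+1) * f with hft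
      have hft0 : ftil ≠ 0 :=
        mul_ne_zero (mul_ne_zero (pow_ne_zero _ X_ne_zero) (pow_ne_zero _ hL0)) hne
      have hdvdft : (X - C x) ^ m ∣ ftil := hdvd.mul_left _
      rcases eq_or_ne (Matrix.of fun i j : Fin (k+1) => derivative^[(i : ℕ)] (ψ j)).det 0
        with hW | hW
      · -- dependent case: reduce the number of terms
        obtain ⟨e, he0, hesum⟩ := wronskian_zero_dep ψ hW
        have hrel : ∑ j : Fin (k+1), C (e j) * X ^ (α j) * L ^ (β j) = 0 := by
          have h2 : X ^ (k+1) * L ^ (k+1) * (∑ j : Fin (k+1), C (e j) * X ^ (α j) * L ^ (β j))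
              = ∑ j : Fin (k+1), C (e j) * ψ j := by
            rw [Finset.mul_sum]
            refine Finset.sum_congr rfl fun j _ => ?_
            rw [hψ, pow_add, pow_add]
            ring
          have h3 := h2.trans hesum
          rcases mul_eq_zero.mp h3 with h4 | h4
          · exact absurd h4 (mul_ne_zero (pow_ne_zero _ X_ne_zero) (pow_ne_zero _ hL0))
          · exact h4
        obtain ⟨j₀, hj₀⟩ := Function.ne_iff.mp he0
        simp only [Pi.zero_apply] at hj₀
        set d' : Fin k → ℚ := fun j =>
          d (j₀.succAbove j) - d j₀ / e j₀ * e (j₀.succAbove j) with hd'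
        have hfeq : f = ∑ j : Fin k,
            C (d' j) * X ^ (α (j₀.succAbove j)) * L ^ (β (j₀.succAbove j)) := by
          have h5 : f = ∑ j : Fin (k+1),
              C (d j - d j₀ / e j₀ * e j) * X ^ (α j) * L ^ (β j) := by
            have h6 : f = f - C (d j₀ / e j₀) *
                (∑ j : Fin (k+1), C (e j) * X ^ (α j) * L ^ (β j)) := by
              rw [hrel, mul_zero, sub_zero]
            rw [h6, hf, Finset.mul_sum, ← Finset.sum_sub_distrib]
            refine Finset.sum_congr rfl fun j _ => ?_
            rw [C_sub, C_mul]
            ring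
          rw [h5, Fin.sum_univ_succAbove _ j₀]
          have hz : d j₀ - d j₀ / e j₀ * e j₀ = 0 := by
            rw [div_mul_cancel₀ _ hj₀]; ring
          rw [hz]
          simp only [map_zero, zero_mul, zero_add]
          rfl
        have hne' : (∑ j : Fin k, C (d' j) * X ^ (α (j₀.succAbove j))
            * L ^ (β (j₀.succAbove j))) ≠ 0 := by rw [← hfeq]; exact hne
        have hdvd' : (X - C x) ^ m ∣ (∑ j : Fin k, C (d' j) * X ^ (α (j₀.succAbove j))
            * L ^ (β (j₀.succAbove j))) := by rw [← hfeq]; exact hdvd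
        have := ih d' (fun j => α (j₀.succAbove j)) (fun j => β (j₀.succAbove j)) m hne' hdvd'
        have hmono : k + 2 * k * k ≤ (k+1) + 2 * (k+1) * (k+1) := by nlinarith
        omega
      · -- independent case: Wronskian bound
        obtain ⟨j₀, hj₀⟩ : ∃ j₀, d j₀ ≠ 0 := by
          by_contra hall
          push_neg at hall
          apply hne
          rw [hf]
          refine Finset.sum_eq_zero fun j _ => ?_
          rw [hall j]
          simp
        set Wr : Matrix (Fin (k+1)) (Fin (k+1)) ℚ[X] :=
          Matrix.of fun j i : Fin (k+1) => derivative^[(i : ℕ)] (ψ j) with hWr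
        have hWrdet : Wr.det ≠ 0 := by
          intro h0
          apply hW
          rw [← Matrix.det_transpose]
          convert h0 using 2
          ext i j
          rfl
        set p : ℚ[X] := X - C x with hp
        -- the updated determinant
        have hrow : (fun i : Fin (k+1) => derivative^[(i : ℕ)] ftil)
            = ∑ j : Fin (k+1), C (d j) • Wr j := by
          funext i
          rw [hftil, Polynomial.iterate_derivative_sum]
          rw [Finset.sum_apply]
          refine Finset.sum_congr rfl fun j _ => ?_
          rw [Polynomial.iterate_derivative_C_mul]
          rfl
        have hdet1 : (Wr.updateRow j₀ (fun i : Fin (k+1) => derivative^[(i : ℕ)] ftil)).det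
            = C (d j₀) * Wr.det := by
          rw [hrow]
          have := Matrix.det_updateRow_sum Wr j₀ (fun j => C (d j))
          rw [this]
          rw [smul_eq_mul]
        -- divisibility of the updated determinant
        have hdvdrow : ∀ i : Fin (k+1), p ^ (m - k) ∣ derivative^[(i : ℕ)] ftil := by
          intro i
          have h1 : p ^ (m - (i:ℕ)) ∣ derivative^[(i:ℕ)] ftil :=
            dvd_iterate_derivative _ hdvdft
          exact dvd_trans (pow_dvd_pow p (by omega : m - k ≤ m - (i:ℕ))) h1
        choose gg hgg using hdvdrow
        have hdvddet : p ^ (m - k) ∣ C (d j₀) * Wr.det := by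
          rw [← hdet1]
          have : (fun i : Fin (k+1) => derivative^[(i : ℕ)] ftil) = p ^ (m - k) • gg := by
            funext i
            rw [hgg i]
            rfl
          rw [this, Matrix.det_updateRow_smul]
          exact Dvd.intro _ rfl
        have hdvdW : p ^ (m - k) ∣ Wr.det := by
          have hu : IsUnit (C (d j₀)) := isUnit_C.mpr hj₀.isUnit
          exact (hu.dvd_mul_left).mp hdvddet
        -- factor the Wronskian
        have hform : ∀ (j i : Fin (k+1)), ∃ q : ℚ[X], q.natDegree ≤ (i:ℕ) ∧
            Wr j i = X ^ (α j + 1) * L ^ (β j + 1) * (X ^ (k - (i:ℕ)) * L ^ (k - (i:ℕ)) * q) := by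
          intro j i
          have hik : (i : ℕ) ≤ k := by omega
          obtain ⟨q, hq1, hq2⟩ := iter_deriv_form a b (i:ℕ) (α j + (k+1)) (β j + (k+1))
            (by omega) (by omega)
          refine ⟨q, hq1, ?_⟩
          have hWji : Wr j i = derivative^[(i:ℕ)] (X ^ (α j + (k+1)) * L ^ (β j + (k+1))) := rfl
          rw [hWji, hq2]
          rw [show α j + (k+1) - (i:ℕ) = (α j + 1) + (k - (i:ℕ)) by omega,
            show β j + (k+1) - (i:ℕ) = (β j + 1) + (k - (i:ℕ)) by omega,
            pow_add, pow_add]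
          ring
        choose q hqdeg hqeq using hform
        set M' : Matrix (Fin (k+1)) (Fin (k+1)) ℚ[X] :=
          Matrix.of fun j i : Fin (k+1) => X ^ (k - (i:ℕ)) * L ^ (k - (i:ℕ)) * q j i with hM'
        have hfact : Wr.det = (∏ j : Fin (k+1), X ^ (α j + 1) * L ^ (β j + 1)) * M'.det := by
          have : Wr = Matrix.of fun j i =>
              (fun j' => X ^ (α j' + 1) * L ^ (β j' + 1)) j * M' j i := by
            apply Matrix.ext
            intro j i
            exact hqeq j i
          rw [this]
          exact Matrix.det_mul_column _ _
        have hM'0 : M'.det ≠ 0 := by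
          intro h0
          apply hWrdet
          rw [hfact, h0, mul_zero]
        have hM'deg : M'.det.natDegree ≤ 2 * k * (k+1) := by
          have := natDegree_det_le M' (fun _ => 2 * k) ?_
          · calc M'.det.natDegree ≤ ∑ _i : Fin (k+1), 2 * k := this
              _ = 2 * k * (k+1) := by
                rw [Finset.sum_const, Finset.card_univ, Fintype.card_fin]
                ring
          · intro j i
            rw [hM']
            simp only [Matrix.of_apply]
            refine le_trans natDegree_mul_le ?_
            have h1 : ((X : ℚ[X]) ^ (k - (i:ℕ))).natDegree ≤ k - (i:ℕ) := by
              rw [natDegree_X_pow]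
            have h2 : (L ^ (k - (i:ℕ))).natDegree ≤ k - (i:ℕ) := by
              rw [natDegree_pow]
              have := L_natDegree_le a b
              calc (k - (i:ℕ)) * L.natDegree ≤ (k - (i:ℕ)) * 1 :=
                Nat.mul_le_mul_left _ (by rw [← hLdef] at this; exact this)
                _ = k - (i:ℕ) := mul_one _
            have h3 : ((X:ℚ[X]) ^ (k - (i:ℕ)) * L ^ (k - (i:ℕ))).natDegree
                ≤ 2 * (k - (i:ℕ)) := le_trans natDegree_mul_le (by omega)
            have h4 := hqdeg j i
            have hik : (i:ℕ) ≤ k := by omega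
            omega
        -- coprimality
        have hpirr : Irreducible p := Polynomial.irreducible_X_sub_C x
        have hcopX : IsCoprime p (X : ℚ[X]) := by
          rw [hpirr.coprime_iff_not_dvd]
          intro hdp
          rw [hp, Polynomial.dvd_iff_isRoot] at hdp
          simp only [IsRoot.def, eval_X] at hdp
          exact hx hdp
        have hcopL : IsCoprime p L := by
          rw [hpirr.coprime_iff_not_dvd]
          intro hdp
          rw [hp, Polynomial.dvd_iff_isRoot] at hdp
          rw [hLdef] at hdp
          simp only [IsRoot.def, eval_add, eval_C, eval_mul, eval_X] at hdp
          exact hLx hdp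
        have hcopProd : IsCoprime (p ^ (m - k)) (∏ j : Fin (k+1), X ^ (α j + 1) * L ^ (β j + 1)) := by
          refine IsCoprime.pow_left ?_
          refine IsCoprime.prod_right fun j _ => ?_
          exact (hcopX.pow_right).mul_right (hcopL.pow_right)
        have hdvdM' : p ^ (m - k) ∣ M'.det := by
          rw [hfact] at hdvdW
          exact hcopProd.dvd_of_dvd_mul_left hdvdW
        have hfin : m - k ≤ 2 * k * (k+1) := by
          have h5 := Polynomial.natDegree_le_of_dvd hdvdM' hM'0
          rw [natDegree_pow, hp, natDegree_X_sub_C, mul_one] at h5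
          omega
        have h7 : m ≤ 2 * k * (k+1) + k := Nat.sub_le_iff_le_add.mp hfin
        nlinarith

lemma P_ne_zero (N : ℕ) : (∏ i ∈ Finset.Icc 1 N, (X ^ i - 1) : ℚ[X]) ≠ 0 := by
  rw [Finset.prod_ne_zero_iff]
  intro i hi h0
  have hXi : (X:ℚ[X]) ^ i = 1 := by linear_combination h0
  have := congrArg natDegree hXi
  rw [natDegree_X_pow, natDegree_one] at this
  have hi1 : 1 ≤ i := (Finset.mem_Icc.mp hi).1
  omega

lemma P_dvd_one (N : ℕ) :
    ((X - C (1:ℚ)) ^ N) ∣ (∏ i ∈ Finset.Icc 1 N, (X ^ i - 1) : ℚ[X]) := by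
  have h1 : ∀ i ∈ Finset.Icc 1 N, (X - C (1:ℚ)) ∣ (X ^ i - 1) := by
    intro i _
    rw [Polynomial.dvd_iff_isRoot]
    simp [IsRoot.def]
  have h2 := Finset.prod_dvd_prod_of_dvd (fun _ => (X - C (1:ℚ)))
    (fun i => (X:ℚ[X]) ^ i - 1) h1
  have h3 : (∏ _i ∈ Finset.Icc 1 N, (X - C (1:ℚ))) = (X - C (1:ℚ)) ^ N := by
    rw [Finset.prod_const, Nat.card_Icc]
    norm_num
  rwa [h3] at h2

lemma P_dvd_negone (n : ℕ) (hn : 1 ≤ n) :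
    ((X - C (-1:ℚ)) ^ (2^(n-1))) ∣ (∏ i ∈ Finset.Icc 1 (2^n), (X ^ i - 1) : ℚ[X]) := by
  set S : Finset ℕ := (Finset.Icc 1 (2^(n-1))).image (fun i => 2 * i) with hS
  have hsub : S ⊆ Finset.Icc 1 (2^n) := by
    intro i hi
    rw [hS, Finset.mem_image] at hi
    obtain ⟨l, hl, rfl⟩ := hi
    rw [Finset.mem_Icc] at hl ⊢
    constructor
    · omega
    · have : 2 * 2^(n-1) = 2^n := by
        rw [← pow_succ']
        congr 1
        omega
      omega
  have hcard : S.card = 2^(n-1) := by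
    rw [hS, Finset.card_image_of_injective _ (fun x y h => by omega)]
    rw [Nat.card_Icc]
    simp
  have h1 : ∀ i ∈ S, (X - C (-1:ℚ)) ∣ (X ^ i - 1) := by
    intro i hi
    rw [hS, Finset.mem_image] at hi
    obtain ⟨l, _, rfl⟩ := hi
    rw [Polynomial.dvd_iff_isRoot]
    simp only [IsRoot.def, eval_sub, eval_pow, eval_X, eval_one]
    rw [pow_mul]
    norm_num
  have h2 := Finset.prod_dvd_prod_of_dvd (fun _ => (X - C (-1:ℚ)))
    (fun i => (X:ℚ[X]) ^ i - 1) h1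
  have h3 : (∏ _i ∈ S, (X - C (-1:ℚ))) = (X - C (-1:ℚ)) ^ (2^(n-1)) := by
    rw [Finset.prod_const, hcard]
  have h4 : (∏ i ∈ S, ((X:ℚ[X]) ^ i - 1)) ∣ (∏ i ∈ Finset.Icc 1 (2^n), ((X:ℚ[X]) ^ i - 1)) :=
    Finset.prod_dvd_prod_of_subset _ _ _ hsub
  rw [h3] at h2
  exact dvd_trans h2 h4

lemma numeric (n t : ℕ) (hn : 100 ≤ n) (ht : (t : ℝ) ≤ (2:ℝ) ^ ((1/4 : ℝ) * n)) :
    (t+1) + 2 * (t+1) * (t+1) < 2 ^ (n-1) := by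
  -- first get a natural-number bound on t
  have hexp : ((1/4 : ℝ) * n) ≤ ((n/4 + 1 : ℕ) : ℝ) := by
    have h4 : (n : ℝ) = 4 * ((n/4 : ℕ) : ℝ) + ((n % 4 : ℕ) : ℝ) := by
      rw [← Nat.cast_ofNat, ← Nat.cast_mul, ← Nat.cast_add, Nat.div_add_mod]
    have hmod : ((n % 4 : ℕ) : ℝ) ≤ 3 := by
      have : n % 4 ≤ 3 := by omega
      exact_mod_cast this
    push_cast
    push_cast at h4
    linarith
  have h2 : (t : ℝ) ≤ (2:ℝ) ^ (((n/4 + 1 : ℕ) : ℝ)) :=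
    le_trans ht (Real.rpow_le_rpow_of_exponent_le one_le_two hexp)
  rw [Real.rpow_natCast] at h2
  have htn : t ≤ 2 ^ (n/4 + 1) := by exact_mod_cast h2
  -- now pure nat arithmetic
  have hk : t + 1 ≤ 2 ^ (n/4 + 2) := by
    have h1 : (1:ℕ) ≤ 2 ^ (n/4+1) := Nat.one_le_two_pow
    have : 2 ^ (n/4 + 2) = 2 ^ (n/4+1) + 2 ^ (n/4+1) := by ring
    omega
  have hB : (t+1) + 2 * (t+1) * (t+1) ≤ 2 ^ (2*(n/4+2) + 2) := by
    have h1 : (t+1) + 2 * (t+1) * (t+1) ≤ 4 * ((t+1) * (t+1)) := by nlinarith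
    have h2 : (t+1) * (t+1) ≤ 2 ^ (n/4+2) * 2 ^ (n/4+2) := Nat.mul_le_mul hk hk
    calc (t+1) + 2 * (t+1) * (t+1) ≤ 4 * ((t+1)*(t+1)) := h1
      _ ≤ 4 * (2 ^ (n/4+2) * 2 ^ (n/4+2)) := by omega
      _ = 2 ^ (2*(n/4+2) + 2) := by rw [← pow_add]; ring_nf
  have hlt : 2*(n/4+2) + 2 < n - 1 := by omega
  calc (t+1) + 2 * (t+1) * (t+1) ≤ 2 ^ (2*(n/4+2)+2) := hB
    _ < 2 ^ (n-1) := Nat.pow_lt_pow_right (by norm_num) hlt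

end AuxST10

open Matrix in
/-- There is a constant `ε > 0` such that for all sufficiently large `n`, the polynomial
`∏_{i=1}^{2^n} (X^i − 1)` cannot be written as `∑_{j=0}^{t} c_j X^{α_j}(a + bX)^{β_j}` with
`t ≤ 2^{εn}`, all exponents `α_j, β_j` of bit size at most `2^{εn}` (i.e. `< 2^{2^{εn}}`), and
all coefficients `c_j` of bit size at most `2^{εn}` (i.e. numerators and denominators of
absolute value `< 2^{2^{εn}}`). -/
theorem stmt10 :
    ∃ ε : ℝ, 0 < ε ∧ ∃ n₀ : ℕ, ∀ n : ℕ, n₀ ≤ n →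
      ∀ (t : ℕ) (c : Fin (t + 1) → ℚ) (α β : Fin (t + 1) → ℕ) (a b : ℚ),
        (t : ℝ) ≤ (2 : ℝ) ^ (ε * n) →
        (∀ j, (α j : ℝ) < (2 : ℝ) ^ ((2 : ℝ) ^ (ε * n))) →
        (∀ j, (β j : ℝ) < (2 : ℝ) ^ ((2 : ℝ) ^ (ε * n))) →
        (∀ j, (|(c j).num| : ℝ) < (2 : ℝ) ^ ((2 : ℝ) ^ (ε * n)) ∧
              ((c j).den : ℝ) < (2 : ℝ) ^ ((2 : ℝ) ^ (ε * n))) →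
        (∏ i ∈ Finset.Icc 1 (2 ^ n), (X ^ i - 1) : ℚ[X]) ≠
          ∑ j, Polynomial.C (c j) * X ^ α j *
            (Polynomial.C a + Polynomial.C b * X) ^ β j := by
  refine ⟨1/4, by norm_num, 100, ?_⟩
  intro n hn t c α β a b ht _ _ _ heq
  set P : ℚ[X] := ∏ i ∈ Finset.Icc 1 (2 ^ n), (X ^ i - 1) with hP
  have hnum := numeric n t hn ht
  have hP0 : P ≠ 0 := P_ne_zero _
  -- the key bound, by cases on a, b
  have hbound : 2 ^ (n-1) ≤ (t+1) + 2 * (t+1) * (t+1) := by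
    rcases ne_or_eq (a + b) 0 with hab | hab
    · -- use x = 1
      have hdvd : (X - C (1:ℚ)) ^ (2^(n-1)) ∣ P := by
        refine dvd_trans (pow_dvd_pow _ ?_) (P_dvd_one (2^n))
        exact Nat.pow_le_pow_right (by norm_num) (by omega)
      rw [heq] at hdvd hP0
      exact core 1 a b one_ne_zero (by rwa [mul_one]) (t+1) c α β (2^(n-1)) hP0 hdvd
    · rcases ne_or_eq (a - b) 0 with hab' | hab'
      · -- use x = -1
        have hdvd : (X - C (-1:ℚ)) ^ (2^(n-1)) ∣ P := P_dvd_negone n (by omega)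
        rw [heq] at hdvd hP0
        refine core (-1) a b (by norm_num) (by rw [mul_neg_one, ← sub_eq_add_neg]; exact hab')
          (t+1) c α β (2^(n-1)) hP0 hdvd
      · -- a = b = 0
        have ha : a = 0 := by linarith [hab, hab']
        have hb : b = 0 := by linarith [hab, hab']
        subst ha hb
        set d' : Fin (t+1) → ℚ := fun j => if β j = 0 then c j else 0 with hd'
        have hre : (∑ j, C (c j) * X ^ α j * (C (0:ℚ) + C (0:ℚ) * X) ^ β j)
            = ∑ j, C (d' j) * X ^ α j * (C (1:ℚ) + C (0:ℚ) * X) ^ ((fun _ => 0) j) := by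
          refine Finset.sum_congr rfl fun j _ => ?_
          rcases eq_or_ne (β j) 0 with h0 | h0
          · rw [hd']
            simp only [if_pos h0, h0]
            simp
          · rw [hd']
            simp only [if_neg h0]
            rw [show (C (0:ℚ) + C (0:ℚ) * X) = 0 by simp]
            rw [zero_pow h0]
            simp
        rw [hre] at heq
        have hdvd : (X - C (1:ℚ)) ^ (2^(n-1)) ∣ P := by
          refine dvd_trans (pow_dvd_pow _ ?_) (P_dvd_one (2^n))
          exact Nat.pow_le_pow_right (by norm_num) (by omega)
        rw [heq] at hdvd hP0
        exact core 1 1 0 one_ne_zero (by norm_num) (t+1) d' α (fun _ => 0) (2^(n-1)) hP0 hdvd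
  omega
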